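/- For m, n ≥ 1, the inclusion Λ^{m,n}ᵢ = (Λᵐᵢ × Δⁿ) ∪ (Δᵐ × ∂Δⁿ) ↪ Δᵐ × Δⁿ is an m-expansion for every 0 ≤ i ≤ m, and the inclusion Λ̃^{m,n}ⱼ = (∂Δᵐ × Δⁿ) ∪ (Δᵐ × Λⁿⱼ) ↪ Δᵐ × Δⁿ is an n-expansion for every 0 ≤ j ≤ n. -/

import Mathlib

open CategoryTheory CategoryTheory.Limits Simplicial Opposite

universe v u

namespace Paper

/-- Auxiliary inductive for `m`-expansions: `ExpansionAux m n₀ i` witnesses a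
finite filtration exhibiting `i` as a composite of pushouts of horn
inclusions `Λ[n,j] ↪ Δ[n]` with `m ≤ n`, the dimensions `n` being weakly
monotone and bounded below by `n₀`. -/
inductive ExpansionAux (m : ℕ) : ℕ → ∀ {S T : SSet.{v}}, (S ⟶ T) → Prop where
  | of_iso {S T : SSet.{v}} (n₀ : ℕ) (i : S ⟶ T) (h : IsIso i) : ExpansionAux m n₀ i
  /-- Attach one horn. -/
  | step {S T U : SSet.{v}} (n₀ n : ℕ) (hmn : m ≤ n) (h₀ : n₀ ≤ n) (j : Fin (n + 1))
      (y : (Λ[n, j] : SSet.{v}) ⟶ S) (i : S ⟶ T) (x : Δ[n] ⟶ T)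
      (hpo : IsPushout y (SSet.horn n j).ι i x)
      {rest : T ⟶ U} (hrest : ExpansionAux m n rest) :
      ExpansionAux m n₀ (i ≫ rest)

/-- `i : S ⟶ T` is an `m`-expansion: it is a finite composite of pushouts of
horn inclusions `Λ[n,j] ↪ Δ[n]` with `n ≥ m`, attached in order of weakly
monotone dimension. -/
def IsExpansion (m : ℕ) {S T : SSet.{v}} (i : S ⟶ T) : Prop :=
  ExpansionAux m 0 i

/-- The pointwise product of two simplicial sets. -/
def prodSSet (A B : SSet.{v}) : SSet.{v} where
  obj k := A.obj k × B.obj k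
  map α := TypeCat.ofHom fun p => (A.map α p.1, B.map α p.2)

/-- The subcomplex `Λ^{m,n}ᵢ = (Λᵐᵢ × Δⁿ) ∪ (Δᵐ × ∂Δⁿ)` of the prism
`Δᵐ × Δⁿ`. -/
def prismHorn (m n : ℕ) (i : Fin (m + 1)) : SSet.{v} where
  obj k := { p : (Δ[m] : SSet.{v}).obj k × (Δ[n] : SSet.{v}).obj k //
    (Set.range ((SSet.stdSimplex.objEquiv p.1).toOrderHom) ∪ {i} ≠ Set.univ) ∨
      ¬ Function.Surjective ((SSet.stdSimplex.objEquiv p.2).toOrderHom) }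
  map {k k'} α := TypeCat.ofHom fun p => ⟨((Δ[m] : SSet.{v}).map α p.1.1, (Δ[n] : SSet.{v}).map α p.1.2), by
    rcases p.2 with h | h
    · refine Or.inl fun hnew => h (Set.eq_univ_of_univ_subset ?_)
      intro x _
      have hx : x ∈ Set.range ((SSet.stdSimplex.objEquiv ((Δ[m] : SSet.{v}).map α p.1.1)).toOrderHom) ∪ {i} := by
        rw [hnew]; trivial
      rcases hx with ⟨a, ha⟩ | hx
      · exact Or.inl ⟨α.unop.toOrderHom a, ha⟩
      · exact Or.inr hx
    · refine Or.inr fun hnew => h fun b => ?_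
      obtain ⟨a, ha⟩ := hnew b
      exact ⟨_, ha⟩⟩

/-- The inclusion `Λ^{m,n}ᵢ ↪ Δᵐ × Δⁿ`. -/
def prismHornIncl (m n : ℕ) (i : Fin (m + 1)) :
    prismHorn.{v} m n i ⟶ prodSSet Δ[m] Δ[n] where
  app k := TypeCat.ofHom fun p => Subtype.val p

/-- The subcomplex `Λ̃^{m,n}ⱼ = (∂Δᵐ × Δⁿ) ∪ (Δᵐ × Λⁿⱼ)` of the prism
`Δᵐ × Δⁿ`. -/
def prismHorn' (m n : ℕ) (j : Fin (n + 1)) : SSet.{v} where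
  obj k := { p : (Δ[m] : SSet.{v}).obj k × (Δ[n] : SSet.{v}).obj k //
    ¬ Function.Surjective ((SSet.stdSimplex.objEquiv p.1).toOrderHom) ∨
      (Set.range ((SSet.stdSimplex.objEquiv p.2).toOrderHom) ∪ {j} ≠ Set.univ) }
  map {k k'} α := TypeCat.ofHom fun p => ⟨((Δ[m] : SSet.{v}).map α p.1.1, (Δ[n] : SSet.{v}).map α p.1.2), by
    rcases p.2 with h | h
    · refine Or.inl fun hnew => h fun b => ?_
      obtain ⟨a, ha⟩ := hnew b
      exact ⟨_, ha⟩
    · refine Or.inr fun hnew => h (Set.eq_univ_of_univ_subset ?_)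
      intro x _
      have hx : x ∈ Set.range ((SSet.stdSimplex.objEquiv ((Δ[n] : SSet.{v}).map α p.1.2)).toOrderHom) ∪ {j} := by
        rw [hnew]; trivial
      rcases hx with ⟨a, ha⟩ | hx
      · exact Or.inl ⟨α.unop.toOrderHom a, ha⟩
      · exact Or.inr hx⟩

/-- The inclusion `Λ̃^{m,n}ⱼ ↪ Δᵐ × Δⁿ`. -/
def prismHornIncl' (m n : ℕ) (j : Fin (n + 1)) :
    prismHorn'.{v} m n j ⟶ prodSSet Δ[m] Δ[n] where
  app k := TypeCat.ofHom fun p => Subtype.val p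


namespace Prism
attribute [local instance] Classical.propDecidable
variable {m n : ℕ}
abbrev P (m n : ℕ) := Fin (m + 1) × Fin (n + 1)
def Chn (C : Finset (P m n)) : Prop := ∀ x ∈ C, ∀ y ∈ C, x ≤ y ∨ y ≤ x
lemma Chn.mono {C C' : Finset (P m n)} (h : C' ⊆ C) (hC : Chn C) : Chn C' :=
  fun x hx y hy => hC x (h hx) y (h hy)
def Miss (i : Fin (m + 1)) (C : Finset (P m n)) : Prop :=
  (∀ a : Fin (m + 1), a = i ∨ ∃ y ∈ C, y.1 = a) ∧ (∀ b : Fin (n + 1), ∃ y ∈ C, y.2 = b)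
lemma Miss.mono {i : Fin (m+1)} {C C' : Finset (P m n)} (h : C ⊆ C') (hC : Miss i C) :
    Miss i C' :=
  ⟨fun a => (hC.1 a).imp id (fun ⟨y, hy, h2⟩ => ⟨y, h hy, h2⟩),
   fun b => (hC.2 b).imp (fun y ⟨hy, h2⟩ => ⟨h hy, h2⟩)⟩
def cand (i : Fin (m + 1)) (C : Finset (P m n)) (b : Fin (n + 1)) : Prop :=
  Chn (insert (i, b) C) ∧ Miss i (C.erase (i, b))
noncomputable def candSet (i : Fin (m + 1)) (C : Finset (P m n)) : Finset (Fin (n + 1)) :=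
  Finset.univ.filter (cand i C)
noncomputable def crit (i : Fin (m + 1)) (C : Finset (P m n)) : Fin (n + 1) :=
  if h : (candSet i C).Nonempty then (candSet i C).min' h else 0
lemma crit_min {i : Fin (m+1)} {C : Finset (P m n)} {b : Fin (n+1)} (hb : cand i C b) :
    crit i C ≤ b := by
  have hne : (candSet i C).Nonempty := ⟨b, by simp [candSet, hb]⟩
  rw [crit, dif_pos hne]
  exact Finset.min'_le _ _ (by simp [candSet, hb])
lemma cand_crit {i : Fin (m+1)} {C : Finset (P m n)}
    (h : (candSet i C).Nonempty) : cand i C (crit i C) := by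
  rw [crit, dif_pos h]
  have := Finset.min'_mem _ h
  simpa [candSet] using this
def Big (i : Fin (m + 1)) (C : Finset (P m n)) : Prop :=
  Miss i C ∧ (i, crit i C) ∈ C


-- NEW PART --

lemma chn_insert {x : P m n} {C : Finset (P m n)} :
    Chn (insert x C) ↔ Chn C ∧ ∀ y ∈ C, x ≤ y ∨ y ≤ x := by
  constructor
  · intro h
    refine ⟨h.mono (Finset.subset_insert _ _), fun y hy => h x (Finset.mem_insert_self _ _) y
      (Finset.mem_insert_of_mem hy)⟩
  · rintro ⟨h1, h2⟩ a ha b hb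
    simp only [Finset.mem_insert] at ha hb
    rcases ha with rfl | ha
    · rcases hb with rfl | hb
      · exact Or.inl le_rfl
      · exact h2 b hb
    · rcases hb with rfl | hb
      · exact (h2 a ha).symm
      · exact h1 a ha b hb

lemma col_comparable {i : Fin (m+1)} {b b' : Fin (n+1)} :
    ((i, b) : P m n) ≤ (i, b') ∨ ((i, b') : P m n) ≤ (i, b) := by
  rcases le_total b b' with h | h
  · exact Or.inl ⟨le_rfl, h⟩
  · exact Or.inr ⟨le_rfl, h⟩

/-- The first condition of `Miss` is stable under erasing a vertex in column `i`. -/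
lemma miss_fst_erase {i : Fin (m+1)} {C : Finset (P m n)} {b : Fin (n+1)}
    (h : ∀ a : Fin (m + 1), a = i ∨ ∃ y ∈ C, y.1 = a) :
    ∀ a : Fin (m + 1), a = i ∨ ∃ y ∈ C.erase (i, b), y.1 = a := by
  intro a
  rcases h a with rfl | ⟨y, hy, hy2⟩
  · exact Or.inl rfl
  · by_cases hyb : y = (i, b)
    · exact Or.inl (by rw [← hy2, hyb])
    · exact Or.inr ⟨y, Finset.mem_erase.2 ⟨hyb, hy⟩, hy2⟩

lemma cand_mem_candSet {i : Fin (m+1)} {C : Finset (P m n)} {b : Fin (n+1)}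
    (h : cand i C b) : b ∈ candSet i C := by simp [candSet, h]

/-- Existence of candidates for a missing chain. -/
lemma cand_exists {i : Fin (m+1)} {C : Finset (P m n)} (hm : 1 ≤ m)
    (hC : Chn C) (hM : Miss i C) : (candSet i C).Nonempty := by
  by_cases hcol : ∃ b, ((i, b) : P m n) ∈ C
  · -- column nonempty; let b₁ be its minimum
    set colS : Finset (Fin (n+1)) := Finset.univ.filter (fun b => ((i,b) : P m n) ∈ C) with hcolS
    have hne : colS.Nonempty := by
      obtain ⟨b, hb⟩ := hcol
      exact ⟨b, by simp [hcolS, hb]⟩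
    set b₁ := colS.min' hne with hb₁
    have hb₁C : ((i, b₁) : P m n) ∈ C := by
      have := Finset.min'_mem colS hne
      simpa [hcolS] using this
    by_cases hsole : ∃ y ∈ C, y ≠ (i, b₁) ∧ y.2 = b₁
    · -- b₁ is a candidate
      have hcand : cand i C b₁ := by
        constructor
        · rwa [Finset.insert_eq_self.2 hb₁C]
        · refine ⟨miss_fst_erase hM.1, fun v => ?_⟩
          by_cases hv : v = b₁
          · obtain ⟨y, hy, hy1, hy2⟩ := hsole
            exact ⟨y, Finset.mem_erase.2 ⟨hy1, hy⟩, by rw [hy2, hv]⟩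
          · obtain ⟨y, hy, hy2⟩ := hM.2 v
            refine ⟨y, Finset.mem_erase.2 ⟨?_, hy⟩, hy2⟩
            rintro rfl
            exact hv hy2.symm
      exact ⟨b₁, cand_mem_candSet hcand⟩
    · push_neg at hsole
      by_cases hb10 : b₁ = 0
      · -- sole carrier at the bottom: then i = 0 and we use the B part
        have hi0 : i = 0 := by
          by_contra hine
          rcases hM.1 0 with h0 | ⟨y, hy, hy1⟩
          · exact hine h0.symm
          · have hyne : y ≠ (i, b₁) := by
              rintro rfl
              exact hine (by rw [← hy1])
            rcases hC y hy _ hb₁C with hle | hle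
            · have hy2 : y.2 = b₁ := le_antisymm (by simpa [hb10] using hle.2) (by simp [hb10])
              exact hyne (by_contra fun hne => hsole y hy hne hy2)
            · apply hine
              have := hle.1
              rw [hy1] at this
              exact le_antisymm this (Fin.zero_le i)
        have hBex : ∃ y ∈ C, i < y.1 := by
          rcases hM.1 (Fin.last m) with hlast | ⟨y, hy, hy1⟩
          · exfalso
            rw [hi0] at hlast
            have h2 := congrArg Fin.val hlast
            rw [Fin.val_last, Fin.val_zero] at h2
            omega
          · refine ⟨y, hy, ?_⟩
            rw [hy1, hi0]
            refine lt_of_le_of_ne (Fin.zero_le _) (Ne.symm ?_)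
            intro h2
            have h3 := congrArg Fin.val h2
            rw [Fin.val_last, Fin.val_zero] at h3
            omega
        obtain ⟨w₀, hw₀C, hw₀⟩ := hBex
        set Bs : Finset (Fin (n+1)) :=
          (C.filter (fun y => i < y.1)).image Prod.snd with hBs
        have hBne : Bs.Nonempty :=
          ⟨w₀.2, Finset.mem_image.2 ⟨w₀, Finset.mem_filter.2 ⟨hw₀C, hw₀⟩, rfl⟩⟩
        set b := Bs.min' hBne with hb
        obtain ⟨w, hwmem, hw2⟩ := Finset.mem_image.1 (Finset.min'_mem Bs hBne)
        have hwC : w ∈ C := (Finset.mem_filter.1 hwmem).1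
        have hwi : i < w.1 := (Finset.mem_filter.1 hwmem).2
        have hcand : cand i C b := by
          constructor
          · rw [chn_insert]
            refine ⟨hC, fun y hy => ?_⟩
            by_cases hy1 : y.1 = i
            · have : y = (i, y.2) := by rw [← hy1]
              rw [this]
              exact col_comparable
            · have hylt : i < y.1 := by
                rw [hi0]
                refine lt_of_le_of_ne (Fin.zero_le _) ?_
                rw [hi0] at hy1
                exact Ne.symm hy1
              refine Or.inl ⟨le_of_lt hylt, ?_⟩
              exact Finset.min'_le _ _ (Finset.mem_image.2 ⟨y, Finset.mem_filter.2 ⟨hy, hylt⟩, rfl⟩)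
          · refine ⟨miss_fst_erase hM.1, fun v => ?_⟩
            by_cases hv : v = b
            · refine ⟨w, Finset.mem_erase.2 ⟨?_, hwC⟩, by rw [hw2, hv]⟩
              rintro rfl
              exact absurd rfl hwi.ne'
            · obtain ⟨y, hy, hy2⟩ := hM.2 v
              refine ⟨y, Finset.mem_erase.2 ⟨?_, hy⟩, hy2⟩
              rintro rfl
              exact hv hy2.symm
        exact ⟨b, cand_mem_candSet hcand⟩
      · -- b₁ > 0 with sole carrier: use b₁ - 1
        set b : Fin (n+1) := ⟨b₁.val - 1, by omega⟩ with hbdef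
        have hb1pos : b₁.val ≠ 0 := fun h => hb10 (Fin.ext h)
        have hblt : b < b₁ := Fin.lt_def.2 (show b₁.val - 1 < b₁.val by omega)
        have hbnotC : ((i, b) : P m n) ∉ C := by
          intro hmem
          have : b₁ ≤ b := Finset.min'_le _ _ (by simp [hcolS, hmem])
          exact absurd this hblt.not_ge
        have hcand : cand i C b := by
          constructor
          · rw [chn_insert]
            refine ⟨hC, fun y hy => ?_⟩
            rcases hC y hy _ hb₁C with hle | hle
            · by_cases hyb₁ : y = (i, b₁)
              · rw [hyb₁]; exact col_comparable
              · have hy2 : y.2 ≠ b₁ := hsole y hy hyb₁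
                have hlt : y.2 < b₁ := lt_of_le_of_ne hle.2 hy2
                have hval := Fin.lt_def.1 hlt
                exact Or.inr ⟨hle.1, Fin.le_def.2 (show y.2.val ≤ b₁.val - 1 by omega)⟩
            · exact Or.inl (le_trans (Prod.mk_le_mk.2 ⟨le_rfl, hblt.le⟩) hle)
          · rw [Finset.erase_eq_of_notMem hbnotC]
            exact hM
        exact ⟨b, cand_mem_candSet hcand⟩
  · -- column empty: take the sup of the second coordinates of elements with y.1 ≤ i
    push_neg at hcol
    set b := (C.filter (fun y => y.1 ≤ i)).sup (fun y => y.2) with hb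
    have hbnotC : ((i, b) : P m n) ∉ C := hcol b
    have hcand : cand i C b := by
      constructor
      · rw [chn_insert]
        refine ⟨hC, fun y hy => ?_⟩
        by_cases hyi : y.1 ≤ i
        · exact Or.inr ⟨hyi, Finset.le_sup (f := fun y => y.2) (Finset.mem_filter.2 ⟨hy, hyi⟩)⟩
        · push_neg at hyi
          refine Or.inl ⟨hyi.le, ?_⟩
          rw [hb]
          apply Finset.sup_le
          intro z hz
          have hzC := (Finset.mem_filter.1 hz).1
          have hzi := (Finset.mem_filter.1 hz).2
          rcases hC z hzC y hy with hle | hle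
          · exact hle.2
          · exact absurd (hle.1.trans hzi) hyi.not_ge
      · rw [Finset.erase_eq_of_notMem hbnotC]
        exact hM
    exact ⟨b, cand_mem_candSet hcand⟩

/-- The partner of a small missing chain. -/
noncomputable def partner (i : Fin (m+1)) (C : Finset (P m n)) : Finset (P m n) :=
  insert (i, crit i C) C

/-- Properties of the partner of a small chain. -/
lemma partner_spec {i : Fin (m+1)} {C : Finset (P m n)} (hm : 1 ≤ m)
    (hC : Chn C) (hM : Miss i C) (hnm : (i, crit i C) ∉ C) :
    Chn (partner i C) ∧ Miss i (partner i C) ∧ crit i (partner i C) = crit i C ∧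
      Big i (partner i C) ∧ (partner i C).erase (i, crit i (partner i C)) = C := by
  have hcand : cand i C (crit i C) := cand_crit (cand_exists hm hC hM)
  set b' := crit i C with hb'
  set E := partner i C with hE
  have hchnE : Chn E := hcand.1
  have hME : Miss i E := hM.mono (Finset.subset_insert _ _)
  have hcandE : cand i E b' := by
    constructor
    · rw [hE, partner, ← hb', Finset.insert_idem]
      exact hchnE
    · rw [hE, partner, ← hb', Finset.erase_insert hnm]
      exact hM
  have hcritle : crit i E ≤ b' := crit_min hcandE
  have hcrit : crit i E = b' := by
    by_contra hne
    have hlt : crit i E < b' := lt_of_le_of_ne hcritle hne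
    set b := crit i E with hb
    have hcandEb : cand i E b := cand_crit ⟨b', cand_mem_candSet hcandE⟩
    have hcandCb : cand i C b := by
      constructor
      · exact hcandEb.1.mono (Finset.insert_subset_insert _ (Finset.subset_insert _ _))
      · refine ⟨miss_fst_erase hM.1, fun v => ?_⟩
        obtain ⟨y, hy, hy2⟩ := hcandEb.2.2 v
        have hyE : y ∈ E := Finset.mem_of_mem_erase hy
        have hyb : y ≠ (i, b) := (Finset.mem_erase.1 hy).1
        by_cases hyb' : y = (i, b')
        · -- need a witness of value b' in C.erase (i,b)
          obtain ⟨z, hz, hz2⟩ := hcand.2.2 b'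
          have hzC : z ∈ C := Finset.mem_of_mem_erase hz
          refine ⟨z, Finset.mem_erase.2 ⟨?_, hzC⟩, by rw [hz2, ← hy2, hyb']⟩
          intro hzb
          rw [hzb] at hz2
          simp only at hz2
          exact hlt.ne (hz2 ▸ rfl)
        · have hyC : y ∈ C := by
            rcases Finset.mem_insert.1 hyE with h | h
            · exact absurd h hyb'
            · exact h
          exact ⟨y, Finset.mem_erase.2 ⟨hyb, hyC⟩, hy2⟩
    exact absurd (crit_min hcandCb) hlt.not_ge
  refine ⟨hchnE, hME, hcrit, ⟨hME, ?_⟩, ?_⟩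
  · rw [hcrit]
    exact Finset.mem_insert_self _ _
  · rw [hcrit, hE, partner, ← hb', Finset.erase_insert hnm]

/-- Properties of the erased critical vertex of a big chain. -/
lemma big_erase_spec {i : Fin (m+1)} {C : Finset (P m n)} (hm : 1 ≤ m)
    (hC : Chn C) (hBig : Big i C) :
    Chn (C.erase (i, crit i C)) ∧ Miss i (C.erase (i, crit i C)) ∧
      crit i (C.erase (i, crit i C)) = crit i C ∧
      (i, crit i (C.erase (i, crit i C))) ∉ C.erase (i, crit i C) ∧
      partner i (C.erase (i, crit i C)) = C := by
  have hcand : cand i C (crit i C) := cand_crit (cand_exists hm hC hBig.1)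
  set b' := crit i C with hb'
  set D := C.erase (i, b') with hD
  have hchnD : Chn D := hC.mono (Finset.erase_subset _ _)
  have hMD : Miss i D := hcand.2
  have hins : insert ((i, b') : P m n) D = C := Finset.insert_erase hBig.2
  have hcandD : cand i D b' := by
    constructor
    · rw [hD, hins]; exact hC
    · rw [hD, Finset.erase_idem]
      exact hMD
  have hcritle : crit i D ≤ b' := crit_min hcandD
  have hcrit : crit i D = b' := by
    by_contra hne
    have hlt : crit i D < b' := lt_of_le_of_ne hcritle hne
    set b := crit i D with hb
    have hcandDb : cand i D b := cand_crit ⟨b', cand_mem_candSet hcandD⟩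
    have hcandCb : cand i C b := by
      constructor
      · rw [← hins, chn_insert]
        refine ⟨by rw [hins]; exact hC, fun y hy => ?_⟩
        rcases Finset.mem_insert.1 hy with rfl | hyD
        · exact col_comparable
        · exact (chn_insert.1 hcandDb.1).2 y hyD
      · refine ⟨miss_fst_erase hBig.1.1, fun v => ?_⟩
        obtain ⟨y, hy, hy2⟩ := hcandDb.2.2 v
        exact ⟨y, Finset.erase_subset_erase _ (Finset.erase_subset _ _) hy, hy2⟩
    exact absurd (crit_min hcandCb) hlt.not_ge
  refine ⟨hchnD, hMD, hcrit, ?_, ?_⟩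
  · rw [hcrit]
    exact Finset.notMem_erase _ _
  · rw [partner, hcrit, hins]

/-- The key combinatorial fact: erasing a non-critical vertex in column `i` from a
big chain yields (if missing) a big chain. -/
lemma facet_big {i : Fin (m+1)} {C : Finset (P m n)} (hm : 1 ≤ m)
    (hC : Chn C) (hBig : Big i C) {b'' : Fin (n+1)} (hne : b'' ≠ crit i C)
    (hmem : ((i, b'') : P m n) ∈ C) (hMc : Miss i (C.erase (i, b''))) :
    Big i (C.erase (i, b'')) := by
  have hcand : cand i C (crit i C) := cand_crit (cand_exists hm hC hBig.1)
  set b' := crit i C with hb'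
  set c := C.erase (i, b'') with hc
  have hchnc : Chn c := hC.mono (Finset.erase_subset _ _)
  have hcandc : cand i c b' := by
    constructor
    · refine Chn.mono ?_ hC
      exact Finset.insert_subset hBig.2 (Finset.erase_subset _ _)
    · constructor
      · exact miss_fst_erase (miss_fst_erase hBig.1.1)
      · intro v
        by_cases hv : v = b'
        · obtain ⟨z, hz, hz2⟩ := hcand.2.2 b'
          have hzC : z ∈ C := Finset.mem_of_mem_erase hz
          have hzb' : z ≠ (i, b') := (Finset.mem_erase.1 hz).1
          have hzb'' : z ≠ (i, b'') := by
            intro h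
            rw [h] at hz2
            exact hne hz2
          exact ⟨z, Finset.mem_erase.2 ⟨hzb', Finset.mem_erase.2 ⟨hzb'', hzC⟩⟩, by rw [hz2, hv]⟩
        · obtain ⟨y, hy, hy2⟩ := hMc.2 v
          refine ⟨y, Finset.mem_erase.2 ⟨?_, hy⟩, hy2⟩
          rintro rfl
          exact hv hy2.symm
  have hcritle : crit i c ≤ b' := crit_min hcandc
  refine ⟨hMc, ?_⟩
  by_contra hnot
  set bc := crit i c with hbc
  have hlt : bc < b' := by
    refine lt_of_le_of_ne hcritle ?_
    intro h
    apply hnot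
    rw [h]
    refine Finset.mem_erase.2 ⟨?_, hBig.2⟩
    intro hcon
    exact hne (by simpa using (Prod.ext_iff.1 hcon).2.symm)
  have hbcb'' : bc ≠ b'' := by
    intro h
    have h2 : insert ((i, bc) : P m n) c = C := by
      rw [h, hc, Finset.insert_erase hmem]
    have hps := (partner_spec hm hchnc hMc hnot).2.2.1
    have hpc : partner i c = C := by rw [partner, ← hbc, h2]
    rw [hpc] at hps
    have hbb : bc = b' := by rw [hbc, ← hps]
    exact hlt.ne hbb
  have hnotC : ((i, bc) : P m n) ∉ C := by
    intro hmem'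
    apply hnot
    refine Finset.mem_erase.2 ⟨?_, hmem'⟩
    intro hcon
    exact hbcb'' (by simpa using (Prod.ext_iff.1 hcon).2)
  have hcandcbc : cand i c bc := cand_crit ⟨b', cand_mem_candSet hcandc⟩
  have hcandCbc : cand i C bc := by
    constructor
    · have hCeq : C = insert ((i, b'') : P m n) c := by rw [hc, Finset.insert_erase hmem]
      rw [hCeq, chn_insert]
      refine ⟨by rw [← hCeq]; exact hC, fun y hy => ?_⟩
      rcases Finset.mem_insert.1 hy with rfl | hyc
      · exact col_comparable
      · exact (chn_insert.1 hcandcbc.1).2 y hyc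
    · rw [Finset.erase_eq_of_notMem hnotC]
      exact hBig.1
  exact absurd (crit_min hcandCbc) hlt.not_ge

/-- Weight of a vertex: distance of its first coordinate to `i`. -/
def wgt (i : Fin (m+1)) (y : P m n) : ℕ := (y.1.val - i.val) + (i.val - y.1.val)

lemma wgt_le (i : Fin (m+1)) (y : P m n) : wgt i y ≤ m := by
  have h1 := y.1.is_le
  have h2 := i.is_le
  unfold wgt
  omega

lemma wgt_col (i : Fin (m+1)) (b : Fin (n+1)) : wgt i ((i, b) : P m n) = 0 := by
  unfold wgt; simp

lemma wgt_pos {i : Fin (m+1)} {y : P m n} (h : y.1 ≠ i) : 1 ≤ wgt i y := by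
  have : y.1.val ≠ i.val := fun hc => h (Fin.ext hc)
  unfold wgt; omega

/-- Total weight of a chain. -/
def sumw (i : Fin (m+1)) (C : Finset (P m n)) : ℕ := ∑ y ∈ C, wgt i y

lemma sumw_lt (i : Fin (m+1)) (C : Finset (P m n)) : sumw i C < (m+1)*(n+1)*(m+1) := by
  have h1 : sumw i C ≤ C.card * m := by
    simpa [sumw] using Finset.sum_le_card_nsmul C (wgt i) m (fun y _ => wgt_le i y)
  have h2 : C.card ≤ (m+1)*(n+1) := by
    have := Finset.card_le_univ C
    simpa [Fintype.card_prod] using this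
  nlinarith

/-- An arbitrary injective encoding of finsets. -/
noncomputable def code (C : Finset (P m n)) : ℕ :=
  (Fintype.equivFin (Finset (P m n)) C).val

lemma code_lt (C : Finset (P m n)) : code C < Fintype.card (Finset (P m n)) :=
  (Fintype.equivFin (Finset (P m n)) C).is_lt

lemma code_inj : Function.Injective (code (m := m) (n := n)) := by
  intro C₁ C₂ h
  exact (Fintype.equivFin (Finset (P m n))).injective (Fin.ext h)

/-- The key of a chain in the attachment order. -/
noncomputable def kval (i : Fin (m+1)) (C : Finset (P m n)) : ℕ :=
  (C.card * ((m+1)*(n+1)*(m+1) + 1) + sumw i C) * Fintype.card (Finset (P m n)) + code C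

lemma kval_lt_of_card_lt {i : Fin (m+1)} {C₁ C₂ : Finset (P m n)}
    (h : C₁.card < C₂.card) : kval i C₁ < kval i C₂ := by
  have hs1 := sumw_lt i C₁
  have hc1 := code_lt C₁
  have hc2 := code_lt C₂
  unfold kval
  nlinarith [Nat.mul_le_mul_right ((m+1)*(n+1)*(m+1) + 1) h,
    Nat.mul_le_mul_right (Fintype.card (Finset (P m n)))
      (Nat.add_le_add (Nat.mul_le_mul_right ((m+1)*(n+1)*(m+1) + 1) h) (Nat.zero_le (sumw i C₂)))]

lemma kval_lt_of_sumw_lt {i : Fin (m+1)} {C₁ C₂ : Finset (P m n)}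
    (hcard : C₁.card = C₂.card) (h : sumw i C₁ < sumw i C₂) : kval i C₁ < kval i C₂ := by
  have hc1 := code_lt C₁
  have hc2 := code_lt C₂
  unfold kval
  rw [hcard]
  nlinarith

lemma kval_inj {i : Fin (m+1)} : Function.Injective (kval i (m := m) (n := n)) := by
  intro C₁ C₂ h
  apply code_inj
  have h1 : code C₁ = kval i C₁ % Fintype.card (Finset (P m n)) := by
    unfold kval
    rw [Nat.add_comm, Nat.add_mul_mod_self_right]
    exact (Nat.mod_eq_of_lt (code_lt C₁)).symm
  have h2 : code C₂ = kval i C₂ % Fintype.card (Finset (P m n)) := by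
    unfold kval
    rw [Nat.add_comm, Nat.add_mul_mod_self_right]
    exact (Nat.mod_eq_of_lt (code_lt C₂)).symm
  rw [h1, h2, h]

lemma card_le_of_kval_le {i : Fin (m+1)} {C₁ C₂ : Finset (P m n)}
    (h : kval i C₁ ≤ kval i C₂) : C₁.card ≤ C₂.card := by
  by_contra hc
  push_neg at hc
  exact absurd (kval_lt_of_card_lt (i := i) hc) h.not_gt

/-- The covering lemma: a missing proper subchain of a big chain `E` is either big
with smaller key, or small with partner of key at most that of `E`. -/
lemma cover {i : Fin (m+1)} {E c : Finset (P m n)} (hm : 1 ≤ m)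
    (hE : Chn E) (hBigE : Big i E) (hsub : c ⊆ E) (hMc : Miss i c) (hne : c ≠ E) :
    (Big i c ∧ kval i c < kval i E) ∨
      (¬ Big i c ∧ kval i (partner i c) ≤ kval i E) := by
  have hssub : c ⊂ E := lt_of_le_of_ne hsub hne
  have hcardlt : c.card < E.card := Finset.card_lt_card hssub
  by_cases hbig : Big i c
  · exact Or.inl ⟨hbig, kval_lt_of_card_lt hcardlt⟩
  · refine Or.inr ⟨hbig, ?_⟩
    have hchnc : Chn c := hE.mono hsub
    have hnm : (i, crit i c) ∉ c := fun h => hbig ⟨hMc, h⟩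
    have hcardp : (partner i c).card = c.card + 1 := Finset.card_insert_of_notMem hnm
    rcases lt_or_eq_of_le (Nat.succ_le_of_lt hcardlt) with hlt | heq
    · -- strictly smaller cardinality
      refine le_of_lt (kval_lt_of_card_lt ?_)
      rw [hcardp]
      exact hlt
    · -- c is a facet of E
      obtain ⟨x, hxE, hxc⟩ := Finset.exists_of_ssubset hssub
      have hcsub : c ⊆ E.erase x := (Finset.subset_erase).2 ⟨hsub, hxc⟩
      have hceq : c = E.erase x := by
        apply Finset.eq_of_subset_of_card_le hcsub
        rw [Finset.card_erase_of_mem hxE]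
        omega
      have hEeq : insert x c = E := by rw [hceq, Finset.insert_erase hxE]
      by_cases hxcrit : x = (i, crit i E)
      · -- c is the partner of E
        have hbes := big_erase_spec hm hE hBigE
        rw [← hxcrit] at hbes
        rw [← hceq] at hbes
        rw [hbes.2.2.2.2]
      · by_cases hx1 : x.1 = i
        · -- x in column i: facet is big, contradiction
          exfalso
          apply hbig
          have hxeq : x = (i, x.2) := by rw [← hx1]
          have hb2crit : x.2 ≠ crit i E := by
            intro h
            exact hxcrit (by rw [hxeq, h])
          have := facet_big hm hE hBigE hb2crit (by rw [← hxeq]; exact hxE)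
            (by rw [← hxeq, ← hceq]; exact hMc)
          rw [← hxeq, ← hceq] at this
          exact this
        · -- x not in column i: weight strictly decreases
          refine le_of_lt (kval_lt_of_sumw_lt ?_ ?_)
          · rw [hcardp, ← hEeq, Finset.card_insert_of_notMem hxc]
          · have h1 : sumw i (partner i c) = sumw i c := by
              unfold sumw partner
              rw [Finset.sum_insert hnm, wgt_col, zero_add]
            have h2 : sumw i E = wgt i x + sumw i c := by
              unfold sumw
              rw [← hEeq, Finset.sum_insert hxc]
            rw [h1, h2]
            have := wgt_pos (i := i) (y := x) hx1
            omega

/-! ## Geometry -/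

/-- The vertex function of a pair of simplices. -/
def pairmap {k : SimplexCategoryᵒᵖ}
    (p : (Δ[m] : SSet.{v}).obj k × (Δ[n] : SSet.{v}).obj k) :
    Fin (k.unop.len + 1) → P m n :=
  fun a => (SSet.stdSimplex.asOrderHom p.1 a, SSet.stdSimplex.asOrderHom p.2 a)

lemma pairmap_mono {k : SimplexCategoryᵒᵖ}
    (p : (Δ[m] : SSet.{v}).obj k × (Δ[n] : SSet.{v}).obj k) {a b : Fin (k.unop.len + 1)}
    (h : a ≤ b) : pairmap p a ≤ pairmap p b :=
  ⟨(SSet.stdSimplex.asOrderHom p.1).monotone h, (SSet.stdSimplex.asOrderHom p.2).monotone h⟩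

/-- The chain of vertices visited by a pair of simplices. -/
def toChain {k : SimplexCategoryᵒᵖ}
    (p : (Δ[m] : SSet.{v}).obj k × (Δ[n] : SSet.{v}).obj k) : Finset (P m n) :=
  Finset.image (pairmap p) Finset.univ

lemma toChain_chn {k : SimplexCategoryᵒᵖ}
    (p : (Δ[m] : SSet.{v}).obj k × (Δ[n] : SSet.{v}).obj k) : Chn (toChain p) := by
  intro x hx y hy
  obtain ⟨a, -, rfl⟩ := Finset.mem_image.1 hx
  obtain ⟨b, -, rfl⟩ := Finset.mem_image.1 hy
  rcases le_total a b with h | h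
  · exact Or.inl (pairmap_mono p h)
  · exact Or.inr (pairmap_mono p h)

lemma toChain_nonempty {k : SimplexCategoryᵒᵖ}
    (p : (Δ[m] : SSet.{v}).obj k × (Δ[n] : SSet.{v}).obj k) : (toChain p).Nonempty :=
  ⟨pairmap p 0, Finset.mem_image.2 ⟨0, Finset.mem_univ _, rfl⟩⟩

/-- The map of pairs induced by a simplicial operator. -/
def mapPair {k k' : SimplexCategoryᵒᵖ} (α : k ⟶ k')
    (p : (Δ[m] : SSet.{v}).obj k × (Δ[n] : SSet.{v}).obj k) :
    (Δ[m] : SSet.{v}).obj k' × (Δ[n] : SSet.{v}).obj k' :=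
  ((Δ[m] : SSet.{v}).map α p.1, (Δ[n] : SSet.{v}).map α p.2)

lemma pairmap_mapPair {k k' : SimplexCategoryᵒᵖ} (α : k ⟶ k')
    (p : (Δ[m] : SSet.{v}).obj k × (Δ[n] : SSet.{v}).obj k) (a : Fin (k'.unop.len + 1)) :
    pairmap (mapPair α p) a = pairmap p (α.unop.toOrderHom a) :=
  rfl

lemma toChain_mapPair {k k' : SimplexCategoryᵒᵖ} (α : k ⟶ k')
    (p : (Δ[m] : SSet.{v}).obj k × (Δ[n] : SSet.{v}).obj k) :
    toChain (mapPair α p) ⊆ toChain p := by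
  intro x hx
  obtain ⟨a, -, rfl⟩ := Finset.mem_image.1 hx
  exact Finset.mem_image.2 ⟨α.unop.toOrderHom a, Finset.mem_univ _, rfl⟩

/-- Downward closure for sets of chains. -/
def DC (S : Set (Finset (P m n))) : Prop :=
  ∀ ⦃c c' : Finset (P m n)⦄, c ∈ S → Chn c → c' ⊆ c → c'.Nonempty → c' ∈ S

/-- The sub-simplicial set of the prism determined by a downward closed set of chains. -/
def sub (S : Set (Finset (P m n))) (hS : DC S) : SSet.{v} where
  obj k := {p : (Δ[m] : SSet.{v}).obj k × (Δ[n] : SSet.{v}).obj k // toChain p ∈ S}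
  map α := TypeCat.ofHom fun p => ⟨mapPair α p.1,
    hS p.2 (toChain_chn p.1) (toChain_mapPair α p.1) (toChain_nonempty _)⟩
  map_id k := by
    refine ConcreteCategory.hom_ext _ _ fun p => ?_
    apply Subtype.ext
    show mapPair (𝟙 k) p.1 = p.1
    unfold mapPair
    rw [FunctorToTypes.map_id_apply, FunctorToTypes.map_id_apply]
  map_comp α β := by
    refine ConcreteCategory.hom_ext _ _ fun p => ?_
    apply Subtype.ext
    show mapPair (α ≫ β) p.1 = mapPair β (mapPair α p.1)
    unfold mapPair
    rw [FunctorToTypes.map_comp_apply, FunctorToTypes.map_comp_apply]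

/-- Inclusion of sub-simplicial sets. -/
def subHom {S T : Set (Finset (P m n))} (hS : DC S) (hT : DC T) (h : S ⊆ T) :
    sub.{v} S hS ⟶ sub T hT where
  app k := TypeCat.ofHom fun p => ⟨p.1, h p.2⟩
  naturality _ _ _ := rfl

lemma subHom_comp {S T U : Set (Finset (P m n))} (hS : DC S) (hT : DC T) (hU : DC U)
    (h1 : S ⊆ T) (h2 : T ⊆ U) :
    subHom.{v} hS hU (h1.trans h2) = subHom hS hT h1 ≫ subHom hT hU h2 := rfl

/-! ## Monotone enumeration of a chain -/

/-- A strictly monotone encoding of the vertex poset. -/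
def enc (y : P m n) : ℕ := (m + n + 2) * (y.1.val + y.2.val) + y.1.val

lemma enc_lt_of_lt {y z : P m n} (h : y < z) : enc y < enc z := by
  have h1 : y.1 ≤ z.1 := (le_of_lt h).1
  have h2 : y.2 ≤ z.2 := (le_of_lt h).2
  have hne : y ≠ z := ne_of_lt h
  have hsum : y.1.val + y.2.val < z.1.val + z.2.val := by
    have h1' : y.1.val ≤ z.1.val := h1
    have h2' : y.2.val ≤ z.2.val := h2
    rcases Nat.lt_or_ge (y.1.val + y.2.val) (z.1.val + z.2.val) with h | h
    · exact h
    · exfalso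
      apply hne
      have e1 : y.1.val = z.1.val := by omega
      have e2 : y.2.val = z.2.val := by omega
      exact Prod.ext (Fin.ext e1) (Fin.ext e2)
  have hy1 : y.1.val < m + n + 2 := by
    have := y.1.is_le
    omega
  calc enc y < (m + n + 2) * (y.1.val + y.2.val) + (m + n + 2) := by unfold enc; omega
    _ = (m + n + 2) * (y.1.val + y.2.val + 1) := by ring
    _ ≤ (m + n + 2) * (z.1.val + z.2.val) := Nat.mul_le_mul_left _ (by omega)
    _ ≤ enc z := by unfold enc; omega

lemma enc_le_of_le {y z : P m n} (h : y ≤ z) : enc y ≤ enc z := by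
  rcases eq_or_lt_of_le h with rfl | h
  · exact le_rfl
  · exact (enc_lt_of_lt h).le

lemma enc_injOn_chain {C : Finset (P m n)} (hC : Chn C) :
    ∀ y ∈ C, ∀ z ∈ C, enc y = enc z → y = z := by
  intro y hy z hz h
  rcases hC y hy z hz with hle | hle
  · rcases eq_or_lt_of_le hle with h' | h'
    · exact h'
    · exact absurd h (enc_lt_of_lt h').ne
  · rcases eq_or_lt_of_le hle with h' | h'
    · exact h'.symm
    · exact absurd h.symm (enc_lt_of_lt h').ne

variable {C : Finset (P m n)} {nn : ℕ}

/-- The image of a chain under the encoding. -/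
def imgC (C : Finset (P m n)) : Finset ℕ := C.image enc

lemma imgC_card (hC : Chn C) (hcard : C.card = nn + 1) : (imgC C).card = nn + 1 := by
  rw [imgC, Finset.card_image_of_injOn (fun y hy z hz => enc_injOn_chain hC y hy z hz), hcard]

/-- The ordered enumeration of a chain with `nn+1` elements. -/
noncomputable def enum (hC : Chn C) (hcard : C.card = nn + 1) (k : Fin (nn + 1)) : P m n :=
  (Finset.mem_image.1 (((imgC C).orderIsoOfFin (imgC_card hC hcard) k).2)).choose

lemma enum_mem (hC : Chn C) (hcard : C.card = nn + 1) (k : Fin (nn + 1)) :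
    enum hC hcard k ∈ C :=
  (Finset.mem_image.1 (((imgC C).orderIsoOfFin (imgC_card hC hcard) k).2)).choose_spec.1

lemma enc_enum (hC : Chn C) (hcard : C.card = nn + 1) (k : Fin (nn + 1)) :
    enc (enum hC hcard k) = ((imgC C).orderIsoOfFin (imgC_card hC hcard) k).val :=
  (Finset.mem_image.1 (((imgC C).orderIsoOfFin (imgC_card hC hcard) k).2)).choose_spec.2

lemma enum_strictMono (hC : Chn C) (hcard : C.card = nn + 1) :
    StrictMono (enum hC hcard) := by
  intro k l hkl
  have henc : enc (enum hC hcard k) < enc (enum hC hcard l) := by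
    rw [enc_enum, enc_enum]
    exact ((imgC C).orderIsoOfFin (imgC_card hC hcard)).strictMono hkl
  rcases hC _ (enum_mem hC hcard k) _ (enum_mem hC hcard l) with hle | hle
  · exact lt_of_le_of_ne hle (fun h => henc.ne (by rw [h]))
  · exact absurd (enc_le_of_le hle) henc.not_ge

lemma enum_inj (hC : Chn C) (hcard : C.card = nn + 1) :
    Function.Injective (enum hC hcard) :=
  (enum_strictMono hC hcard).injective

lemma enum_le_reflect (hC : Chn C) (hcard : C.card = nn + 1) {k l : Fin (nn + 1)}
    (h : enum hC hcard k ≤ enum hC hcard l) : k ≤ l := by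
  by_contra hc
  push_neg at hc
  exact absurd (lt_of_le_of_lt h (enum_strictMono hC hcard hc)) (lt_irrefl _)

lemma enum_surj (hC : Chn C) (hcard : C.card = nn + 1) {y : P m n} (hy : y ∈ C) :
    ∃ k, enum hC hcard k = y := by
  have hmem : enc y ∈ imgC C := Finset.mem_image.2 ⟨y, hy, rfl⟩
  set e := (imgC C).orderIsoOfFin (imgC_card hC hcard)
  refine ⟨e.symm ⟨enc y, hmem⟩, ?_⟩
  apply enc_injOn_chain hC _ (enum_mem hC hcard _) _ hy
  rw [enc_enum]
  show (e (e.symm ⟨enc y, hmem⟩)).val = enc y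
  rw [OrderIso.apply_symm_apply]

lemma enum_image (hC : Chn C) (hcard : C.card = nn + 1) :
    Finset.image (enum hC hcard) Finset.univ = C := by
  apply Finset.Subset.antisymm
  · intro y hy
    obtain ⟨k, -, rfl⟩ := Finset.mem_image.1 hy
    exact enum_mem hC hcard k
  · intro y hy
    obtain ⟨k, hk⟩ := enum_surj hC hcard hy
    exact Finset.mem_image.2 ⟨k, Finset.mem_univ _, hk⟩

/-! ## The pushout step -/

section Push

variable {S : Set (Finset (P m n))} {C : Finset (P m n)} {nn : ℕ}

/-- The pair of simplices determined by a simplicial operator into the chain `C`. -/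
noncomputable def sPair (hC : Chn C) (hcard : C.card = nn + 1) {k : SimplexCategoryᵒᵖ}
    (α : (Δ[nn] : SSet.{v}).obj k) :
    (Δ[m] : SSet.{v}).obj k × (Δ[n] : SSet.{v}).obj k :=
  (SSet.stdSimplex.objMk
    ⟨fun a => (enum hC hcard (SSet.stdSimplex.asOrderHom α a)).1,
      fun a b hab => ((enum_strictMono hC hcard).monotone
        ((SSet.stdSimplex.asOrderHom α).monotone hab)).1⟩,
   SSet.stdSimplex.objMk
    ⟨fun a => (enum hC hcard (SSet.stdSimplex.asOrderHom α a)).2,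
      fun a b hab => ((enum_strictMono hC hcard).monotone
        ((SSet.stdSimplex.asOrderHom α).monotone hab)).2⟩)

lemma pairmap_sPair (hC : Chn C) (hcard : C.card = nn + 1) {k : SimplexCategoryᵒᵖ}
    (α : (Δ[nn] : SSet.{v}).obj k) (a : Fin (k.unop.len + 1)) :
    pairmap (sPair hC hcard α) a = enum hC hcard (SSet.stdSimplex.asOrderHom α a) :=
  rfl

lemma toChain_sPair (hC : Chn C) (hcard : C.card = nn + 1) {k : SimplexCategoryᵒᵖ}
    (α : (Δ[nn] : SSet.{v}).obj k) :
    toChain (sPair hC hcard α) =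
      Finset.image (fun a => enum hC hcard (SSet.stdSimplex.asOrderHom α a)) Finset.univ :=
  rfl

lemma toChain_sPair_subset (hC : Chn C) (hcard : C.card = nn + 1) {k : SimplexCategoryᵒᵖ}
    (α : (Δ[nn] : SSet.{v}).obj k) : toChain (sPair hC hcard α) ⊆ C := by
  rw [toChain_sPair]
  intro y hy
  obtain ⟨a, -, rfl⟩ := Finset.mem_image.1 hy
  exact enum_mem hC hcard _

lemma sPair_natural (hC : Chn C) (hcard : C.card = nn + 1) {k k' : SimplexCategoryᵒᵖ}
    (g : k ⟶ k') (α : (Δ[nn] : SSet.{v}).obj k) :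
    sPair hC hcard ((Δ[nn] : SSet.{v}).map g α) = mapPair g (sPair hC hcard α) :=
  rfl

/-- If the simplicial operator misses a vertex `l ≠ j`, its chain lies in `S`. -/
lemma toChain_mem_S (hS : DC S) (hC : Chn C) (hcard : C.card = nn + 1) (j : Fin (nn + 1))
    (hface : ∀ c, c ⊆ C → c.Nonempty → c ≠ C → c ≠ C.erase (enum hC hcard j) → c ∈ S)
    {k : SimplexCategoryᵒᵖ} (α : (Δ[nn] : SSet.{v}).obj k)
    (hα : Set.range (SSet.stdSimplex.asOrderHom α) ∪ {j} ≠ Set.univ) :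
    toChain (sPair hC hcard α) ∈ S := by
  rw [Set.ne_univ_iff_exists_notMem] at hα
  obtain ⟨l, hl⟩ := hα
  simp only [Set.mem_union, Set.mem_range, Set.mem_singleton_iff, not_or, not_exists] at hl
  obtain ⟨hlr, hlj⟩ := hl
  have hnotc : enum hC hcard l ∉ toChain (sPair hC hcard α) := by
    rw [toChain_sPair]
    intro hmem
    obtain ⟨a, -, ha⟩ := Finset.mem_image.1 hmem
    exact hlr a (enum_inj hC hcard ha)
  refine hface _ (toChain_sPair_subset hC hcard α) (toChain_nonempty _) ?_ ?_
  · intro h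
    rw [h] at hnotc
    exact hnotc (enum_mem hC hcard l)
  · intro h
    apply hnotc
    rw [h]
    exact Finset.mem_erase.2 ⟨fun hc => hlj (enum_inj hC hcard hc), enum_mem hC hcard l⟩

/-- Conversely, if the chain of a simplicial operator lies in `S`, the operator is
in the horn. -/
lemma mem_horn_of_toChain_S (hC : Chn C) (hcard : C.card = nn + 1) (j : Fin (nn + 1))
    (hCS : C ∉ S) (hDS : C.erase (enum hC hcard j) ∉ S)
    {k : SimplexCategoryᵒᵖ} (α : (Δ[nn] : SSet.{v}).obj k)
    (hmem : toChain (sPair hC hcard α) ∈ S) :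
    Set.range (SSet.stdSimplex.asOrderHom α) ∪ {j} ≠ Set.univ := by
  intro huniv
  have hsubC := toChain_sPair_subset hC hcard α
  have hD : C.erase (enum hC hcard j) ⊆ toChain (sPair hC hcard α) := by
    intro y hy
    obtain ⟨hyne, hyC⟩ := Finset.mem_erase.1 hy
    obtain ⟨l, rfl⟩ := enum_surj hC hcard hyC
    have hlj : l ≠ j := fun h => hyne (by rw [h])
    have : l ∈ Set.range (SSet.stdSimplex.asOrderHom α) ∪ {j} := huniv ▸ Set.mem_univ l
    rcases this with ⟨a, ha⟩ | hl
    · rw [toChain_sPair]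
      exact Finset.mem_image.2 ⟨a, Finset.mem_univ _, by rw [ha]⟩
    · exact absurd hl hlj
  by_cases hj : enum hC hcard j ∈ toChain (sPair hC hcard α)
  · have : toChain (sPair hC hcard α) = C := by
      apply Finset.Subset.antisymm hsubC
      intro y hy
      by_cases hyj : y = enum hC hcard j
      · rw [hyj]; exact hj
      · exact hD (Finset.mem_erase.2 ⟨hyj, hy⟩)
    exact hCS (this ▸ hmem)
  · have : toChain (sPair hC hcard α) = C.erase (enum hC hcard j) := by
      apply Finset.Subset.antisymm _ hD
      intro y hy
      refine Finset.mem_erase.2 ⟨fun h => hj (h ▸ hy), hsubC hy⟩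
    exact hDS (this ▸ hmem)

/-- The union `S ∪ {C, D}` is downward closed. -/
lemma DC_SU (hS : DC S) (hC : Chn C) (hcard : C.card = nn + 1) (j : Fin (nn + 1))
    (hface : ∀ c, c ⊆ C → c.Nonempty → c ≠ C → c ≠ C.erase (enum hC hcard j) → c ∈ S) :
    DC (S ∪ {C, C.erase (enum hC hcard j)}) := by
  intro c c' hc hchn hsub hne
  have haux : c' ⊆ C → c' ∈ S ∪ {C, C.erase (enum hC hcard j)} := by
    intro hsubC
    by_cases h1 : c' = C
    · exact Or.inr (Or.inl h1)
    by_cases h2 : c' = C.erase (enum hC hcard j)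
    · exact Or.inr (Or.inr h2)
    · exact Or.inl (hface c' hsubC hne h1 h2)
  rcases hc with hc | hc | hc
  · exact Or.inl (hS hc hchn hsub hne)
  · exact haux (hc ▸ hsub)
  · exact haux (hsub.trans (hc ▸ Finset.erase_subset _ _))

/-- The attaching simplex. -/
noncomputable def xmap (hS : DC S) (hC : Chn C) (hcard : C.card = nn + 1) (j : Fin (nn + 1))
    (hface : ∀ c, c ⊆ C → c.Nonempty → c ≠ C → c ≠ C.erase (enum hC hcard j) → c ∈ S) :
    (Δ[nn] : SSet.{v}) ⟶ sub (S ∪ {C, C.erase (enum hC hcard j)}) (DC_SU hS hC hcard j hface) where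
  app k := TypeCat.ofHom fun α => ⟨sPair hC hcard α, by
    by_cases h1 : toChain (sPair hC hcard α) = C
    · exact Or.inr (Or.inl h1)
    by_cases h2 : toChain (sPair hC hcard α) = C.erase (enum hC hcard j)
    · exact Or.inr (Or.inr h2)
    · exact Or.inl (hface _ (toChain_sPair_subset hC hcard α) (toChain_nonempty _) h1 h2)⟩
  naturality _ _ _ := rfl

/-- The horn map. -/
noncomputable def ymap (hS : DC S) (hC : Chn C) (hcard : C.card = nn + 1) (j : Fin (nn + 1))
    (hface : ∀ c, c ⊆ C → c.Nonempty → c ≠ C → c ≠ C.erase (enum hC hcard j) → c ∈ S) :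
    (Λ[nn, j] : SSet.{v}) ⟶ sub S hS where
  app k := TypeCat.ofHom fun β => ⟨sPair hC hcard β.1, toChain_mem_S hS hC hcard j hface β.1 β.2⟩
  naturality _ _ _ := rfl

end Push

section Push2

variable {S : Set (Finset (P m n))} {C : Finset (P m n)} {nn : ℕ}

/-- Inverse of the enumeration. -/
noncomputable def einv (hC : Chn C) (hcard : C.card = nn + 1) (y : P m n) (hy : y ∈ C) :
    Fin (nn + 1) :=
  (enum_surj hC hcard hy).choose

lemma enum_einv (hC : Chn C) (hcard : C.card = nn + 1) (y : P m n) (hy : y ∈ C) :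
    enum hC hcard (einv hC hcard y hy) = y :=
  (enum_surj hC hcard hy).choose_spec

lemma einv_enum (hC : Chn C) (hcard : C.card = nn + 1) (l : Fin (nn + 1)) (h) :
    einv hC hcard (enum hC hcard l) h = l :=
  enum_inj hC hcard (enum_einv hC hcard _ _)

/-- The simplicial operator recovered from a pair of simplices lying in `C`. -/
noncomputable def invSimplex (hC : Chn C) (hcard : C.card = nn + 1) {k : SimplexCategoryᵒᵖ}
    (p : (Δ[m] : SSet.{v}).obj k × (Δ[n] : SSet.{v}).obj k) (hsub : toChain p ⊆ C) :
    (Δ[nn] : SSet.{v}).obj k :=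
  SSet.stdSimplex.objMk
    ⟨fun a => einv hC hcard (pairmap p a) (hsub (Finset.mem_image.2 ⟨a, Finset.mem_univ _, rfl⟩)),
     fun a b hab => by
      apply enum_le_reflect hC hcard
      rw [enum_einv, enum_einv]
      exact pairmap_mono p hab⟩

lemma objMk_eq {N : ℕ} {k : SimplexCategoryᵒᵖ} {q : (Δ[N] : SSet.{v}).obj k}
    (f : Fin (k.unop.len + 1) →o Fin (N + 1)) (h : ∀ a, f a = SSet.stdSimplex.asOrderHom q a) :
    SSet.stdSimplex.objMk f = q := by
  have hf : f = SSet.stdSimplex.asOrderHom q := OrderHom.ext _ _ (funext h)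
  rw [hf]
  rfl

lemma sPair_invSimplex (hC : Chn C) (hcard : C.card = nn + 1) {k : SimplexCategoryᵒᵖ}
    (p : (Δ[m] : SSet.{v}).obj k × (Δ[n] : SSet.{v}).obj k) (hsub : toChain p ⊆ C) :
    sPair hC hcard (invSimplex hC hcard p hsub) = p := by
  have key : ∀ a : Fin (k.unop.len + 1),
      enum hC hcard (SSet.stdSimplex.asOrderHom (invSimplex hC hcard p hsub) a) = pairmap p a := by
    intro a
    exact enum_einv hC hcard (pairmap p a)
      (hsub (Finset.mem_image.2 ⟨a, Finset.mem_univ _, rfl⟩))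
  apply Prod.ext
  · exact objMk_eq _ (fun a => congrArg Prod.fst (key a))
  · exact objMk_eq _ (fun a => congrArg Prod.snd (key a))

lemma toChain_subset_of_not_S (hC : Chn C) (hcard : C.card = nn + 1) (j : Fin (nn + 1))
    {k : SimplexCategoryᵒᵖ} {p : (Δ[m] : SSet.{v}).obj k × (Δ[n] : SSet.{v}).obj k}
    (hp2 : toChain p ∈ S ∪ {C, C.erase (enum hC hcard j)}) (hp : toChain p ∉ S) :
    toChain p ⊆ C := by
  rcases hp2 with h | h | h
  · exact absurd h hp
  · exact h ▸ Finset.Subset.refl C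
  · exact h ▸ Finset.erase_subset _ _

variable (hS : DC S) (hC : Chn C) (hcard : C.card = nn + 1) (j : Fin (nn + 1))
  (hface : ∀ c, c ⊆ C → c.Nonempty → c ≠ C → c ≠ C.erase (enum hC hcard j) → c ∈ S)

/-- `invSimplex` is left inverse to `sPair`. -/
lemma invSimplex_sPair {k : SimplexCategoryᵒᵖ}
    (α : (Δ[nn] : SSet.{v}).obj k) (hsub : toChain (sPair hC hcard α) ⊆ C) :
    invSimplex hC hcard (sPair hC hcard α) hsub = α := by
  unfold invSimplex
  refine objMk_eq _ (fun a => ?_)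
  exact einv_enum hC hcard (SSet.stdSimplex.asOrderHom α a)
    (hsub (Finset.mem_image.2 ⟨a, Finset.mem_univ _, rfl⟩))

/-- The descent function for the pushout cocone. -/
noncomputable def descFun
    (s : PushoutCocone (ymap.{v} hS hC hcard j hface) ((SSet.horn nn j).ι))
    {k : SimplexCategoryᵒᵖ} (p : (Δ[m] : SSet.{v}).obj k × (Δ[n] : SSet.{v}).obj k)
    (hp2 : toChain p ∈ S ∪ {C, C.erase (enum hC hcard j)}) : s.pt.obj k :=
  if hp : toChain p ∈ S then s.inl.app k ⟨p, hp⟩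
  else s.inr.app k (invSimplex hC hcard p (toChain_subset_of_not_S hC hcard j hp2 hp))

lemma descFun_inr (hCS : C ∉ S) (hDS : C.erase (enum hC hcard j) ∉ S)
    (s : PushoutCocone (ymap.{v} hS hC hcard j hface) ((SSet.horn nn j).ι))
    {k : SimplexCategoryᵒᵖ} (α : (Δ[nn] : SSet.{v}).obj k)
    (hp2 : toChain (sPair hC hcard α) ∈ S ∪ {C, C.erase (enum hC hcard j)}) :
    descFun hS hC hcard j hface s (sPair hC hcard α) hp2 = s.inr.app k α := by
  unfold descFun
  by_cases hp : toChain (sPair hC hcard α) ∈ S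
  · rw [dif_pos hp]
    have hα : Set.range (SSet.stdSimplex.asOrderHom α) ∪ {j} ≠ Set.univ :=
      mem_horn_of_toChain_S hC hcard j hCS hDS α hp
    have e := ConcreteCategory.congr_hom (congrArg (fun (f : (Λ[nn, j] : SSet.{v}) ⟶ s.pt) => f.app k) s.condition)
      ⟨α, hα⟩
    exact (NatTrans.comp_app_apply _ _ _ _).symm.trans (e.trans (NatTrans.comp_app_apply _ _ _ _))
  · rw [dif_neg hp]
    exact congrArg (s.inr.app k) (invSimplex_sPair hC hcard α _)


lemma descFun_eq_inr (hCS : C ∉ S) (hDS : C.erase (enum hC hcard j) ∉ S)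
    (s : PushoutCocone (ymap.{v} hS hC hcard j hface) ((SSet.horn nn j).ι))
    {k : SimplexCategoryᵒᵖ} (p : (Δ[m] : SSet.{v}).obj k × (Δ[n] : SSet.{v}).obj k)
    (hp2 : toChain p ∈ S ∪ {C, C.erase (enum hC hcard j)}) (hsub : toChain p ⊆ C) :
    descFun hS hC hcard j hface s p hp2 = s.inr.app k (invSimplex hC hcard p hsub) := by
  have e := sPair_invSimplex hC hcard p hsub
  revert hp2
  generalize invSimplex hC hcard p hsub = α' at e ⊢
  subst e
  intro hp2
  exact descFun_inr hS hC hcard j hface hCS hDS s α' hp2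

lemma descFun_natural (hCS : C ∉ S) (hDS : C.erase (enum hC hcard j) ∉ S)
    (s : PushoutCocone (ymap.{v} hS hC hcard j hface) ((SSet.horn nn j).ι))
    {k k' : SimplexCategoryᵒᵖ} (g : k ⟶ k')
    (p : (Δ[m] : SSet.{v}).obj k × (Δ[n] : SSet.{v}).obj k)
    (hp2 : toChain p ∈ S ∪ {C, C.erase (enum hC hcard j)})
    (hp2' : toChain (mapPair g p) ∈ S ∪ {C, C.erase (enum hC hcard j)}) :
    s.pt.map g (descFun hS hC hcard j hface s p hp2) =
      descFun hS hC hcard j hface s (mapPair g p) hp2' := by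
  by_cases hp : toChain p ∈ S
  · have hp' : toChain (mapPair g p) ∈ S :=
      hS hp (toChain_chn _) (toChain_mapPair g p) (toChain_nonempty _)
    unfold descFun
    rw [dif_pos hp, dif_pos hp']
    exact (s.inl.naturality_apply g ⟨p, hp⟩).symm
  · have hsub : toChain p ⊆ C := toChain_subset_of_not_S hC hcard j hp2 hp
    have hsub' : toChain (mapPair g p) ⊆ C := (toChain_mapPair g p).trans hsub
    rw [descFun_eq_inr hS hC hcard j hface hCS hDS s p hp2 hsub,
      descFun_eq_inr hS hC hcard j hface hCS hDS s (mapPair g p) hp2' hsub']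
    calc s.pt.map g (s.inr.app k (invSimplex hC hcard p hsub))
        = s.inr.app k' ((Δ[nn] : SSet.{v}).map g (invSimplex hC hcard p hsub)) :=
          (s.inr.naturality_apply g _).symm
      _ = s.inr.app k' (invSimplex hC hcard (mapPair g p) hsub') := rfl

/-- The pushout property of the attachment. -/
theorem isPushout_step (hCS : C ∉ S) (hDS : C.erase (enum hC hcard j) ∉ S) :
    IsPushout (ymap.{v} hS hC hcard j hface) ((SSet.horn nn j).ι)
      (subHom hS (DC_SU hS hC hcard j hface) Set.subset_union_left)
      (xmap hS hC hcard j hface) := by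
  have comm : ymap.{v} hS hC hcard j hface ≫
      subHom hS (DC_SU hS hC hcard j hface) Set.subset_union_left =
      (SSet.horn nn j).ι ≫ xmap hS hC hcard j hface := rfl
  apply IsPushout.of_isColimit (c := PushoutCocone.mk _ _ comm)
  refine PushoutCocone.IsColimit.mk comm
    (fun s => ⟨fun k => TypeCat.ofHom fun p => descFun hS hC hcard j hface s p.1 p.2, ?_⟩) ?_ ?_ ?_
  · -- naturality of desc
    intro k k' g
    refine ConcreteCategory.hom_ext _ _ fun p => ?_
    have hmem' : toChain (mapPair g p.1) ∈ S ∪ {C, C.erase (enum hC hcard j)} :=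
      (DC_SU hS hC hcard j hface) p.2 (toChain_chn _) (toChain_mapPair g p.1)
        (toChain_nonempty _)
    exact (descFun_natural hS hC hcard j hface hCS hDS _ g p.1 p.2 hmem').symm
  · -- fac left
    intro s
    apply NatTrans.ext
    funext k; refine ConcreteCategory.hom_ext _ _ fun p => ?_
    show descFun hS hC hcard j hface s p.1 (Or.inl p.2) = s.inl.app k p
    unfold descFun
    rw [dif_pos p.2]
    exact congrArg (s.inl.app k) (Subtype.ext rfl)
  · -- fac right
    intro s
    apply NatTrans.ext
    funext k; refine ConcreteCategory.hom_ext _ _ fun α => ?_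
    exact descFun_inr hS hC hcard j hface hCS hDS s α
      ((xmap hS hC hcard j hface).app k α).2
  · -- uniqueness
    intro s q h1 h2
    apply NatTrans.ext
    funext k; refine ConcreteCategory.hom_ext _ _ fun p => ?_
    show q.app k p = descFun hS hC hcard j hface s p.1 p.2
    by_cases hp : toChain p.1 ∈ S
    · unfold descFun
      rw [dif_pos hp]
      have hp' : p = (subHom hS (DC_SU hS hC hcard j hface) Set.subset_union_left).app k
          ⟨p.1, hp⟩ := Subtype.ext rfl
      conv_lhs => rw [hp']
      have e := ConcreteCategory.congr_hom (congrArg (fun (f : sub S hS ⟶ s.pt) => f.app k) h1) ⟨p.1, hp⟩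
      exact (NatTrans.comp_app_apply _ _ _ _).symm.trans e
    · have hsub := toChain_subset_of_not_S (S := S) hC hcard j p.2 hp
      rw [descFun_eq_inr hS hC hcard j hface hCS hDS s p.1 p.2 hsub]
      have hp' : p = (xmap hS hC hcard j hface).app k (invSimplex hC hcard p.1 hsub) := by
        apply Subtype.ext
        exact (sPair_invSimplex hC hcard p.1 hsub).symm
      conv_lhs => rw [hp']
      have e := ConcreteCategory.congr_hom (congrArg (fun (f : (Δ[nn] : SSet.{v}) ⟶ s.pt) => f.app k) h2)
        (invSimplex hC hcard p.1 hsub)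
      rw [NatTrans.comp_app_apply] at e
      exact e

end Push2

/-! ## The filtration -/

lemma DC_univ : DC (Set.univ : Set (Finset (P m n))) :=
  fun _ _ _ _ _ _ => trivial

lemma subHom_isIso {S T : Set (Finset (P m n))} (hS : DC S) (hT : DC T) (h : S ⊆ T)
    (hall : ∀ (k : SimplexCategoryᵒᵖ) (p : (sub.{v} T hT).obj k), toChain p.1 ∈ S) :
    IsIso (subHom.{v} hS hT h) := by
  refine ⟨⟨{ app := fun k => TypeCat.ofHom fun p => ⟨p.1, hall k p⟩, naturality := fun _ _ _ => rfl }, ?_, ?_⟩⟩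
  · apply NatTrans.ext; funext k; refine ConcreteCategory.hom_ext _ _ fun p => ?_; exact Subtype.ext rfl
  · apply NatTrans.ext; funext k; refine ConcreteCategory.hom_ext _ _ fun p => ?_; exact Subtype.ext rfl

/-- The canonical state of the filtration at time `t`. -/
def GoodAt (i : Fin (m+1)) (t : ℕ) (S : Set (Finset (P m n))) : Prop :=
  ∀ c, Chn c → (c ∈ S ↔ ¬ Miss i c ∨ (Big i c ∧ kval i c < t) ∨
    (Miss i c ∧ ¬ Big i c ∧ kval i (partner i c) < t))

lemma DC_good (hm : 1 ≤ m) (i : Fin (m+1)) {t : ℕ} {S : Set (Finset (P m n))}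
    (hG : GoodAt i t S) : DC S := by
  intro c c' hc hchn hsub _
  have hchn' : Chn c' := hchn.mono hsub
  rw [hG c' hchn']
  by_cases hM' : Miss i c'
  · right
    have hM : Miss i c := hM'.mono hsub
    rcases (hG c hchn).1 hc with h | ⟨hbigc, hk⟩ | ⟨hMc, hnb, hk⟩
    · exact absurd hM h
    · by_cases he : c' = c
      · exact Or.inl ⟨he ▸ hbigc, he ▸ hk⟩
      · rcases cover hm hchn hbigc hsub hM' he with ⟨hb', hlt⟩ | ⟨hnb', hle⟩
        · exact Or.inl ⟨hb', hlt.trans hk⟩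
        · exact Or.inr ⟨hM', hnb', lt_of_le_of_lt hle hk⟩
    · have hnm : (i, crit i c) ∉ c := fun h => hnb ⟨hMc, h⟩
      obtain ⟨hchnE, hME, hcritE, hBigE, herased⟩ := partner_spec hm hchn hMc hnm
      have hsubE : c' ⊆ partner i c := hsub.trans (Finset.subset_insert _ _)
      have hneE : c' ≠ partner i c := by
        intro h
        have h1 : c'.card ≤ c.card := Finset.card_le_card hsub
        have h2 : (partner i c).card = c.card + 1 := Finset.card_insert_of_notMem hnm
        rw [h, h2] at h1
        omega
      rcases cover hm hchnE hBigE hsubE hM' hneE with ⟨hb', hlt⟩ | ⟨hnb', hle⟩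
      · exact Or.inl ⟨hb', hlt.trans hk⟩
      · exact Or.inr ⟨hM', hnb', lt_of_le_of_lt hle hk⟩
  · exact Or.inl hM'

lemma all_mem (hm : 1 ≤ m) (i : Fin (m+1)) {t : ℕ} {S : Set (Finset (P m n))}
    (hG : GoodAt i t S) (hempty : ∀ X : Finset (P m n), Chn X → Big i X → kval i X < t)
    (k : SimplexCategoryᵒᵖ) (p : (sub.{v} (Set.univ : Set (Finset (P m n))) DC_univ).obj k) :
    toChain p.1 ∈ S := by
  rw [hG _ (toChain_chn _)]
  set c := toChain p.1 with hc
  by_cases hM : Miss i c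
  · by_cases hbig : Big i c
    · exact Or.inr (Or.inl ⟨hbig, hempty c (toChain_chn _) hbig⟩)
    · have hnm : (i, crit i c) ∉ c := fun h => hbig ⟨hM, h⟩
      obtain ⟨hchnE, hME, hcritE, hBigE, herased⟩ := partner_spec hm (toChain_chn _) hM hnm
      exact Or.inr (Or.inr ⟨hM, hbig, hempty _ hchnE hBigE⟩)
  · exact Or.inl hM

/-- The main induction: the inclusion of a good stage into the full prism is an
expansion. -/
lemma main (hm : 1 ≤ m) (i : Fin (m+1)) :
    ∀ (N t d : ℕ) (S : Set (Finset (P m n))) (hG : GoodAt i t S)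
      (_ : (Finset.univ.filter
        (fun X : Finset (P m n) => Chn X ∧ Big i X ∧ t ≤ kval i X)).card ≤ N)
      (_ : ∀ X : Finset (P m n), Chn X → Big i X → t ≤ kval i X → d ≤ X.card - 1),
      ExpansionAux.{v} m d (subHom (DC_good hm i hG) DC_univ (Set.subset_univ S)) := by
  intro N
  induction N with
  | zero =>
    intro t d S hG hN hd
    refine ExpansionAux.of_iso d _ (subHom_isIso _ _ _ (all_mem hm i hG ?_))
    intro X hchn hbig
    by_contra hcon
    push_neg at hcon
    have : X ∈ Finset.univ.filter
        (fun X : Finset (P m n) => Chn X ∧ Big i X ∧ t ≤ kval i X) := by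
      simp only [Finset.mem_filter, Finset.mem_univ, true_and]
      exact ⟨hchn, hbig, hcon⟩
    rw [Finset.card_eq_zero.1 (Nat.le_zero.1 hN)] at this
    exact absurd this (Finset.notMem_empty X)
  | succ N IH =>
    intro t d S hG hN hd
    by_cases hne : (Finset.univ.filter
        (fun X : Finset (P m n) => Chn X ∧ Big i X ∧ t ≤ kval i X)).Nonempty
    swap
    · -- no remaining big chains: isomorphism
      refine ExpansionAux.of_iso d _ (subHom_isIso _ _ _ (all_mem hm i hG ?_))
      intro X hchn hbig
      by_contra hcon
      push_neg at hcon
      exact hne ⟨X, by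
        simp only [Finset.mem_filter, Finset.mem_univ, true_and]
        exact ⟨hchn, hbig, hcon⟩⟩
    · obtain ⟨C₀, hC₀mem, hC₀min⟩ := Finset.exists_min_image _ (kval i) hne
      simp only [Finset.mem_filter, Finset.mem_univ, true_and] at hC₀mem
      obtain ⟨hchn, hbig, ht⟩ := hC₀mem
      -- basic facts about C₀
      have hfst : ∀ a : Fin (m+1), ∃ y ∈ C₀, y.1 = a := by
        intro a
        rcases hbig.1.1 a with rfl | h
        · exact ⟨(a, crit a C₀), hbig.2, rfl⟩
        · exact h
      have hcardge : m + 1 ≤ C₀.card := by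
        have himg : (Finset.univ : Finset (Fin (m+1))) ⊆ C₀.image Prod.fst := by
          intro a _
          obtain ⟨y, hy, hy1⟩ := hfst a
          exact Finset.mem_image.2 ⟨y, hy, hy1⟩
        calc m + 1 = (Finset.univ : Finset (Fin (m+1))).card := by simp
          _ ≤ (C₀.image Prod.fst).card := Finset.card_le_card himg
          _ ≤ C₀.card := Finset.card_image_le
      set nn := C₀.card - 1 with hnn
      have hcard : C₀.card = nn + 1 := by omega
      have hmn : m ≤ nn := by omega
      set j := einv hchn hcard ((i, crit i C₀) : P m n) hbig.2 with hj
      have henumj : enum hchn hcard j = (i, crit i C₀) := enum_einv hchn hcard _ _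
      obtain ⟨hchnD, hMD, hcritD, hnmD, hpD⟩ := big_erase_spec hm hchn hbig
      -- C₀ is not in S
      have hCS : C₀ ∉ S := by
        intro hmem
        rcases (hG C₀ hchn).1 hmem with h | ⟨_, hk⟩ | ⟨_, hnb, _⟩
        · exact h hbig.1
        · omega
        · exact hnb hbig
      have hDS : C₀.erase (enum hchn hcard j) ∉ S := by
        rw [henumj]
        intro hmem
        rcases (hG _ hchnD).1 hmem with h | ⟨hb, _⟩ | ⟨_, _, hk⟩
        · exact h hMD
        · exact hnmD hb.2
        · rw [hpD] at hk; omega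
      have hface : ∀ c, c ⊆ C₀ → c.Nonempty → c ≠ C₀ →
          c ≠ C₀.erase (enum hchn hcard j) → c ∈ S := by
        intro c hsub hcne hne1 hne2
        rw [henumj] at hne2
        have hchnc : Chn c := hchn.mono hsub
        rw [hG c hchnc]
        by_cases hM : Miss i c
        · right
          rcases cover hm hchn hbig hsub hM hne1 with ⟨hb', hlt⟩ | ⟨hnb', hle⟩
          · -- c big, key smaller than that of C₀, hence smaller than t
            left
            refine ⟨hb', ?_⟩
            by_contra hcon
            push_neg at hcon
            have : kval i C₀ ≤ kval i c := hC₀min c (by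
              simp only [Finset.mem_filter, Finset.mem_univ, true_and]
              exact ⟨hchnc, hb', hcon⟩)
            omega
          · right
            refine ⟨hM, hnb', ?_⟩
            have hnmc : (i, crit i c) ∉ c := fun h => hnb' ⟨hM, h⟩
            obtain ⟨hchnE, hME, hcritE, hBigE, herased⟩ := partner_spec hm hchnc hM hnmc
            have hlt : kval i (partner i c) < kval i C₀ := by
              rcases lt_or_eq_of_le hle with h | h
              · exact h
              · exfalso
                have hpC : partner i c = C₀ := kval_inj h
                apply hne2
                rw [← herased, hpC]
            by_contra hcon
            push_neg at hcon
            have : kval i C₀ ≤ kval i (partner i c) := hC₀min _ (by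
              simp only [Finset.mem_filter, Finset.mem_univ, true_and]
              exact ⟨hchnE, hBigE, hcon⟩)
            omega
        · exact Or.inl hM
      -- the pushout
      have hpo := isPushout_step (S := S) (DC_good hm i hG) hchn hcard j hface hCS hDS
      -- good at the next stage
      have hG' : GoodAt i (kval i C₀ + 1)
          (S ∪ {C₀, C₀.erase (enum hchn hcard j)}) := by
        intro c hchnc
        constructor
        · rintro (hc | hc | hc)
          · rcases (hG c hchnc).1 hc with h | ⟨hb, hk⟩ | ⟨hMk, hnb, hk⟩
            · exact Or.inl h
            · exact Or.inr (Or.inl ⟨hb, by omega⟩)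
            · exact Or.inr (Or.inr ⟨hMk, hnb, by omega⟩)
          · rw [hc]
            exact Or.inr (Or.inl ⟨hbig, by omega⟩)
          · rw [hc, henumj]
            refine Or.inr (Or.inr ⟨hMD, ?_, ?_⟩)
            · intro hb
              exact hnmD (hb.2)
            · rw [hpD]
              omega
        · rintro (h | ⟨hb, hk⟩ | ⟨hMk, hnb, hk⟩)
          · exact Or.inl ((hG c hchnc).2 (Or.inl h))
          · by_cases hkt : kval i c < t
            · exact Or.inl ((hG c hchnc).2 (Or.inr (Or.inl ⟨hb, hkt⟩)))
            · push_neg at hkt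
              have : kval i C₀ ≤ kval i c := hC₀min c (by
                simp only [Finset.mem_filter, Finset.mem_univ, true_and]
                exact ⟨hchnc, hb, hkt⟩)
              have heq : kval i c = kval i C₀ := by omega
              exact Or.inr (Or.inl (kval_inj heq))
          · by_cases hkt : kval i (partner i c) < t
            · exact Or.inl ((hG c hchnc).2 (Or.inr (Or.inr ⟨hMk, hnb, hkt⟩)))
            · push_neg at hkt
              have hnmc : (i, crit i c) ∉ c := fun h => hnb ⟨hMk, h⟩
              obtain ⟨hchnE, hME, hcritE, hBigE, herased⟩ :=
                partner_spec hm hchnc hMk hnmc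
              have : kval i C₀ ≤ kval i (partner i c) := hC₀min _ (by
                simp only [Finset.mem_filter, Finset.mem_univ, true_and]
                exact ⟨hchnE, hBigE, hkt⟩)
              have heq : kval i (partner i c) = kval i C₀ := by omega
              have hpC : partner i c = C₀ := kval_inj heq
              right; right
              show c = C₀.erase (enum hchn hcard j)
              rw [henumj, ← herased, hpC]
          -- end
      -- cardinality bound for the next stage
      have hN' : (Finset.univ.filter (fun X : Finset (P m n) =>
          Chn X ∧ Big i X ∧ kval i C₀ + 1 ≤ kval i X)).card ≤ N := by
        have hsub2 : Finset.univ.filter (fun X : Finset (P m n) =>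
            Chn X ∧ Big i X ∧ kval i C₀ + 1 ≤ kval i X) ⊆
            (Finset.univ.filter (fun X : Finset (P m n) =>
              Chn X ∧ Big i X ∧ t ≤ kval i X)).erase C₀ := by
          intro X hX
          simp only [Finset.mem_filter, Finset.mem_univ, true_and] at hX
          refine Finset.mem_erase.2 ⟨?_, ?_⟩
          · intro h
            rw [h] at hX
            omega
          · simp only [Finset.mem_filter, Finset.mem_univ, true_and]
            exact ⟨hX.1, hX.2.1, by omega⟩
        calc (Finset.univ.filter (fun X : Finset (P m n) =>
            Chn X ∧ Big i X ∧ kval i C₀ + 1 ≤ kval i X)).card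
            ≤ ((Finset.univ.filter (fun X : Finset (P m n) =>
              Chn X ∧ Big i X ∧ t ≤ kval i X)).erase C₀).card :=
              Finset.card_le_card hsub2
          _ = (Finset.univ.filter (fun X : Finset (P m n) =>
              Chn X ∧ Big i X ∧ t ≤ kval i X)).card - 1 :=
              Finset.card_erase_of_mem (by
                simp only [Finset.mem_filter, Finset.mem_univ, true_and]
                exact ⟨hchn, hbig, ht⟩)
          _ ≤ N := by omega
      have hd' : ∀ X : Finset (P m n), Chn X → Big i X → kval i C₀ + 1 ≤ kval i X →
          nn ≤ X.card - 1 := by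
        intro X _ _ hk
        have : C₀.card ≤ X.card := card_le_of_kval_le (i := i) (by omega)
        omega
      have hrest := IH (kval i C₀ + 1) nn _ hG' hN' hd'
      have htd : d ≤ nn := by
        have := hd C₀ hchn hbig ht
        omega
      have hstep := ExpansionAux.step (m := m) d nn hmn htd j
        (ymap (DC_good hm i hG) hchn hcard j hface)
        (subHom (DC_good hm i hG) (DC_SU (DC_good hm i hG) hchn hcard j hface)
          Set.subset_union_left)
        (xmap (DC_good hm i hG) hchn hcard j hface) hpo
        (rest := subHom (DC_good hm i hG') DC_univ (Set.subset_univ _)) hrest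
      exact hstep


/-! ## Transfer of expansions along isomorphisms of arrows -/

lemma transfer {mm : ℕ} {X Y : SSet.{v}} {f : X ⟶ Y} {n₀ : ℕ}
    (h : ExpansionAux.{v} mm n₀ f) :
    ∀ {X' Y' : SSet.{v}} (g : X' ⟶ Y') (eS : X ≅ X') (eT : Y ≅ Y'),
      f ≫ eT.hom = eS.hom ≫ g → ExpansionAux.{v} mm n₀ g := by
  induction h with
  | of_iso n₀ f hf =>
    intro X' Y' g eS eT hsq
    have hg : g = eS.inv ≫ f ≫ eT.hom := by
      rw [hsq]
      simp
    rw [hg]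
    haveI := hf
    exact ExpansionAux.of_iso _ _ inferInstance
  | step n₀ nv hmn h₀ j y ii x hpo hrest IH =>
    rename_i rest
    intro X' Y' g eS eT hsq
    have hpo' : IsPushout (y ≫ eS.hom) ((SSet.horn nv j).ι) (eS.inv ≫ ii) x :=
      hpo.of_iso (Iso.refl _) eS (Iso.refl _) (Iso.refl _) (by simp) (by simp) (by simp)
        (by simp)
    have hrest' : ExpansionAux.{v} mm nv (rest ≫ eT.hom) :=
      IH (rest ≫ eT.hom) (Iso.refl _) eT (by simp)
    have hstep := ExpansionAux.step n₀ nv hmn h₀ j (y ≫ eS.hom) (eS.inv ≫ ii) x hpo' hrest'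
    have hg : (eS.inv ≫ ii) ≫ rest ≫ eT.hom = g := by
      calc (eS.inv ≫ ii) ≫ rest ≫ eT.hom = eS.inv ≫ (ii ≫ rest) ≫ eT.hom := by simp
        _ = eS.inv ≫ eS.hom ≫ g := by rw [hsq]
        _ = g := by simp
    exact hg ▸ hstep

/-! ## Translation isomorphisms -/

lemma not_miss_iff (i : Fin (m+1)) {k : SimplexCategoryᵒᵖ}
    (p : (Δ[m] : SSet.{v}).obj k × (Δ[n] : SSet.{v}).obj k) :
    (Set.range (SSet.stdSimplex.asOrderHom p.1) ∪ {i} ≠ Set.univ ∨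
      ¬ Function.Surjective (SSet.stdSimplex.asOrderHom p.2)) ↔ ¬ Miss i (toChain p) := by
  have h1 : (Set.range (SSet.stdSimplex.asOrderHom p.1) ∪ {i} = Set.univ) ↔
      (∀ a, a = i ∨ ∃ y ∈ toChain p, y.1 = a) := by
    rw [Set.eq_univ_iff_forall]
    apply forall_congr'
    intro a
    simp only [Set.mem_union, Set.mem_range, Set.mem_singleton_iff]
    constructor
    · rintro (⟨x, rfl⟩ | rfl)
      · exact Or.inr ⟨pairmap p x, Finset.mem_image.2 ⟨x, Finset.mem_univ _, rfl⟩, rfl⟩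
      · exact Or.inl rfl
    · rintro (rfl | ⟨y, hy, rfl⟩)
      · exact Or.inr rfl
      · obtain ⟨x, -, rfl⟩ := Finset.mem_image.1 hy
        exact Or.inl ⟨x, rfl⟩
  have h2 : Function.Surjective (SSet.stdSimplex.asOrderHom p.2) ↔ (∀ b, ∃ y ∈ toChain p, y.2 = b) := by
    constructor
    · intro h b
      obtain ⟨x, hx⟩ := h b
      exact ⟨pairmap p x, Finset.mem_image.2 ⟨x, Finset.mem_univ _, rfl⟩, hx⟩
    · intro h b
      obtain ⟨y, hy, hyb⟩ := h b
      obtain ⟨x, -, rfl⟩ := Finset.mem_image.1 hy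
      exact ⟨x, hyb⟩
  unfold Miss
  rw [not_and_or]
  exact or_congr (not_congr h1) (not_congr h2)

/-- `GoodAt` at time `0` for the prism horn. -/
lemma goodAt_zero (i : Fin (m+1)) :
    GoodAt i 0 ({c | ¬ Miss i c} : Set (Finset (P m n))) := by
  intro c _
  constructor
  · intro h
    exact Or.inl h
  · rintro (h | ⟨_, h⟩ | ⟨_, _, h⟩)
    · exact h
    · omega
    · omega

/-- The prism horn is isomorphic to the sub simplicial set at time `0`. -/
noncomputable def prismIso (hm : 1 ≤ m) (i : Fin (m+1)) :
    sub.{v} ({c | ¬ Miss i c} : Set (Finset (P m n))) (DC_good hm i (goodAt_zero i)) ≅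
      prismHorn.{v} m n i where
  hom := { app := fun k => TypeCat.ofHom fun p => ⟨p.1, (not_miss_iff i p.1).2 p.2⟩,
           naturality := fun _ _ _ => rfl }
  inv := { app := fun k => TypeCat.ofHom fun p => ⟨p.1, (not_miss_iff i p.1).1 p.2⟩,
           naturality := fun _ _ _ => rfl }
  hom_inv_id := by
    apply NatTrans.ext; funext k; refine ConcreteCategory.hom_ext _ _ fun p => ?_; exact Subtype.ext rfl
  inv_hom_id := by
    apply NatTrans.ext; funext k; refine ConcreteCategory.hom_ext _ _ fun p => ?_; exact Subtype.ext rfl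

/-- The sub simplicial set of all chains is the full prism. -/
noncomputable def univIso :
    sub.{v} (Set.univ : Set (Finset (P m n))) DC_univ ≅ prodSSet.{v} Δ[m] Δ[n] where
  hom := { app := fun k => TypeCat.ofHom fun p => p.1, naturality := fun _ _ _ => rfl }
  inv := { app := fun k => TypeCat.ofHom fun p => ⟨p, trivial⟩, naturality := fun _ _ _ => rfl }
  hom_inv_id := by
    apply NatTrans.ext; funext k; refine ConcreteCategory.hom_ext _ _ fun p => ?_; exact Subtype.ext rfl
  inv_hom_id := by
    apply NatTrans.ext; funext k; refine ConcreteCategory.hom_ext _ _ fun p => ?_; rfl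

/-- First half: the inclusion of the prism horn is an `m`-expansion. -/
theorem expansion_incl (hm : 1 ≤ m) (i : Fin (m+1)) :
    IsExpansion.{v} m (prismHornIncl.{v} m n i) := by
  have hmain := main.{v} hm i
    (Finset.univ.filter
      (fun X : Finset (P m n) => Chn X ∧ Big i X ∧ 0 ≤ kval i X)).card 0 0
    ({c | ¬ Miss i c} : Set (Finset (P m n))) (goodAt_zero i) le_rfl
    (fun X _ _ _ => Nat.zero_le _)
  exact transfer hmain (prismHornIncl.{v} m n i) (prismIso.{v} hm i) univIso.{v} rfl

/-- The swap isomorphism on products. -/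
noncomputable def swapProd :
    prodSSet.{v} Δ[n] Δ[m] ≅ prodSSet.{v} Δ[m] Δ[n] where
  hom := { app := fun k => TypeCat.ofHom fun p => (p.2, p.1), naturality := fun _ _ _ => rfl }
  inv := { app := fun k => TypeCat.ofHom fun p => (p.2, p.1), naturality := fun _ _ _ => rfl }
  hom_inv_id := by apply NatTrans.ext; funext k; refine ConcreteCategory.hom_ext _ _ fun p => ?_; rfl
  inv_hom_id := by apply NatTrans.ext; funext k; refine ConcreteCategory.hom_ext _ _ fun p => ?_; rfl

/-- The swap isomorphism identifying the second prism horn with the first one with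
the roles of the factors exchanged. -/
noncomputable def swapHorn (j : Fin (n+1)) :
    prismHorn.{v} n m j ≅ prismHorn'.{v} m n j where
  hom := { app := fun k => TypeCat.ofHom fun p => ⟨(p.1.2, p.1.1), p.2.symm⟩,
           naturality := fun _ _ _ => rfl }
  inv := { app := fun k => TypeCat.ofHom fun p => ⟨(p.1.2, p.1.1), p.2.symm⟩,
           naturality := fun _ _ _ => rfl }
  hom_inv_id := by apply NatTrans.ext; funext k; refine ConcreteCategory.hom_ext _ _ fun p => ?_; exact Subtype.ext rfl
  inv_hom_id := by apply NatTrans.ext; funext k; refine ConcreteCategory.hom_ext _ _ fun p => ?_; exact Subtype.ext rfl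

/-- Second half: the inclusion of the second prism horn is an `n`-expansion. -/
theorem expansion_incl' (hn : 1 ≤ n) (j : Fin (n+1)) :
    IsExpansion.{v} n (prismHornIncl'.{v} m n j) := by
  have h := expansion_incl.{v} (m := n) (n := m) hn j
  exact transfer h (prismHornIncl'.{v} m n j) (swapHorn.{v} j) swapProd.{v} rfl

end Prism


/-- For `m, n ≥ 1`, the inclusion `Λ^{m,n}ᵢ ↪ Δᵐ × Δⁿ` is an `m`-expansion
for every `0 ≤ i ≤ m`, and the inclusion `Λ̃^{m,n}ⱼ ↪ Δᵐ × Δⁿ` is an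
`n`-expansion for every `0 ≤ j ≤ n`. -/
theorem prismHorn_isExpansion (m n : ℕ) (hm : 1 ≤ m) (hn : 1 ≤ n) :
    (∀ i : Fin (m + 1), IsExpansion m (prismHornIncl.{v} m n i)) ∧
    (∀ j : Fin (n + 1), IsExpansion n (prismHornIncl'.{v} m n j)) := by
  exact ⟨fun i => Prism.expansion_incl.{v} hm i, fun j => Prism.expansion_incl'.{v} hn j⟩

end Paper
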